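/- arXiv:1205.2342 — 2 statements merged into one kernel-verified Lean document; each statement's English description precedes it below -/
import Mathlib

section
/- Let Δ be a pure chamber complex of rank n with a type function, and suppose that the link of every vertex is a thick chamber complex of rank n−1. If the geometric realization of Δ (with the weak topology) is connected, then Δ is gallery-connected, i.e. any two chambers of Δ can be joined by a gallery. -/
/-! Basic combinatorial infrastructure: abstract simplicial complexes, chamber
complexes, galleries, typed complexes and geometries of type `M` in the sense of Tits. -/

/-- An abstract simplicial complex on the vertex set `V`, given by its set of
(finite) faces, closed under passing to subsets. -/
structure SComplex (V : Type*) [DecidableEq V] where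
  faces : Set (Finset V)
  down_closed : ∀ ⦃s t : Finset V⦄, s ∈ faces → t ⊆ s → t ∈ faces

namespace SComplex

variable {V : Type*} [DecidableEq V] (K : SComplex V)

/-- A chamber is a maximal face. -/
def IsChamber (c : Finset V) : Prop :=
  c ∈ K.faces ∧ ∀ s ∈ K.faces, c ⊆ s → s = c

/-- A complex is pure of rank `n` if every face is contained in a chamber and every
chamber has `n` vertices. -/
def Pure (n : ℕ) : Prop :=
  (∀ s ∈ K.faces, ∃ c, K.IsChamber c ∧ s ⊆ c) ∧ ∀ c, K.IsChamber c → c.card = n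

/-- Two chambers are adjacent (in a complex of rank `n`) if they share a face of
corank at most 1. -/
def Adj (n : ℕ) (c d : Finset V) : Prop :=
  K.IsChamber c ∧ K.IsChamber d ∧ n ≤ (c ∩ d).card + 1

/-- A pure rank-`n` complex is gallery-connected if any two chambers are joined by a
gallery, i.e. by a chain of consecutively adjacent chambers. -/
def GalleryConnected (n : ℕ) : Prop :=
  ∀ c d, K.IsChamber c → K.IsChamber d → Relation.ReflTransGen (K.Adj n) c d

/-- A chamber complex of rank `n`: pure of rank `n` and gallery-connected. -/
def IsChamberComplex (n : ℕ) : Prop :=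
  K.Pure n ∧ K.GalleryConnected n

/-- Thickness: every corank-1 face lies in at least three chambers. -/
def Thick (n : ℕ) : Prop :=
  ∀ s ∈ K.faces, s.card + 1 = n →
    ∃ c₁ c₂ c₃ : Finset V, K.IsChamber c₁ ∧ K.IsChamber c₂ ∧ K.IsChamber c₃ ∧
      s ⊆ c₁ ∧ s ⊆ c₂ ∧ s ⊆ c₃ ∧ c₁ ≠ c₂ ∧ c₁ ≠ c₃ ∧ c₂ ≠ c₃

/-- The link of a simplex `α`. -/
def link (α : Finset V) : SComplex V where
  faces := {s | Disjoint α s ∧ α ∪ s ∈ K.faces}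
  down_closed := by
    intro s t hs hts
    exact ⟨hs.1.mono_right (Finset.coe_subset.2 hts |>.trans le_rfl),
      K.down_closed hs.2 (Finset.union_subset_union le_rfl hts)⟩

/-- The graph on the vertices of a complex, two vertices being adjacent when they are
joined by an edge of the complex. -/
def vertexGraph : SimpleGraph {v : V // {v} ∈ K.faces} where
  Adj u w := u ≠ w ∧ {u.1, w.1} ∈ K.faces
  symm := by
    constructor
    intro u w h
    exact ⟨h.1.symm, by rw [Finset.pair_comm]; exact h.2⟩
  loopless := ⟨fun u h => h.1 rfl⟩

/-- A generalized `n`-gon: a thick chamber complex of rank 2 whose vertex graph has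
girth `2n` and diameter `n`. -/
def IsGenNGon (n : ℕ) : Prop :=
  K.IsChamberComplex 2 ∧ K.Thick 2 ∧
    K.vertexGraph.egirth = (2 * n : ℕ) ∧ K.vertexGraph.ediam = (n : ℕ)

end SComplex

/-- A complex with a type function, injective on every face, with values in the finite
set `I` of types. -/
structure TypedComplex (V I : Type*) [DecidableEq V] where
  cplx : SComplex V
  typ : V → I
  typ_injOn : ∀ s ∈ cplx.faces, Set.InjOn typ ↑s

namespace TypedComplex

variable {V I : Type*} [DecidableEq V] [DecidableEq I] [Fintype I]

/-- A geometry over `I`: a thick, residually connected flag complex, pure of rank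
`card I`, with a type function. -/
def IsGeometry (Δ : TypedComplex V I) : Prop :=
  (∅ : Finset V) ∈ Δ.cplx.faces ∧
  Δ.cplx.Pure (Fintype.card I) ∧
  Δ.cplx.Thick (Fintype.card I) ∧
  (∀ s : Finset V, (∀ v ∈ s, {v} ∈ Δ.cplx.faces) →
    (∀ u ∈ s, ∀ v ∈ s, u ≠ v → ({u, v} : Finset V) ∈ Δ.cplx.faces) →
    s ∈ Δ.cplx.faces) ∧
  ∀ s ∈ Δ.cplx.faces, s.card < Fintype.card I →
    (Δ.cplx.link s).IsChamberComplex (Fintype.card I - s.card)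

/-- A geometry of type `M`, for a Coxeter matrix `M` over `I`: the link of every
corank-2 face of cotype `{i, j}` is a generalized `M i j`-gon. -/
def IsGeomOfType (Δ : TypedComplex V I) (M : CoxeterMatrix I) : Prop :=
  Δ.IsGeometry ∧
  ∀ s ∈ Δ.cplx.faces, ∀ i j : I, i ≠ j →
    s.image Δ.typ = (Finset.univ.erase i).erase j →
    (Δ.cplx.link s).IsGenNGon (M i j)

/-- Nonstammering galleries from `c` to `e` together with their type: the list of
cotypes of the consecutive intersections. -/
inductive GalleryOfType (Δ : TypedComplex V I) :
    Finset V → Finset V → List I → Prop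
  | nil {c : Finset V} (hc : Δ.cplx.IsChamber c) : GalleryOfType Δ c c []
  | cons {c d e : Finset V} {i : I} {ω : List I}
      (hc : Δ.cplx.IsChamber c) (hd : Δ.cplx.IsChamber d) (hne : c ≠ d)
      (hcot : (c ∩ d).image Δ.typ = Finset.univ.erase i)
      (hrest : GalleryOfType Δ d e ω) : GalleryOfType Δ c e (i :: ω)

end TypedComplex

/-- The restriction of a Coxeter matrix to a subset of the index set. -/
def CoxeterMatrix.restrict {B : Type*} (M : CoxeterMatrix B) (J : Set B) :
    CoxeterMatrix J where
  M := fun i j => M i.1 j.1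
  isSymm := by
    ext i j
    exact M.symmetric j.1 i.1
  diagonal i := M.diagonal i.1
  off_diagonal i j h := M.off_diagonal i.1 j.1 fun hc => h (Subtype.ext hc)

namespace SComplex

variable {V : Type*} [DecidableEq V] (K : SComplex V)

/-- The geometric realization of a simplicial complex, as a set: convex combinations
of the vertices of a face. -/
def Space : Type _ :=
  {f : V → ℝ // ∃ s ∈ K.faces, (∀ v, 0 ≤ f v) ∧ (∀ v, f v ≠ 0 → v ∈ s) ∧ ∑ v ∈ s, f v = 1}

/-- The inclusion of the closed simplex of a face into the geometric realization. -/
def inclSimplex {s : Finset V} (hs : s ∈ K.faces)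
    (x : stdSimplex ℝ {v : V // v ∈ s}) : K.Space :=
  ⟨fun v => if h : v ∈ s then x.1 ⟨v, h⟩ else 0,
   s, hs,
   by
     intro v
     dsimp only
     split
     · exact x.2.1 _
     · exact le_rfl,
   by
     intro v hv
     by_contra h
     exact hv (dif_neg h),
   by
     rw [Finset.sum_dite_of_true fun _ h => h, ← x.2.2]⟩

/-- The *weak topology* on the geometric realization: the final topology with respect
to the inclusions of all closed simplices. -/
instance : TopologicalSpace K.Space :=
  ⨆ s : {s : Finset V // s ∈ K.faces},
    TopologicalSpace.coinduced (K.inclSimplex s.2) inferInstance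

end SComplex

section Aux

variable {V : Type*} [DecidableEq V]

/-- If `e` is a chamber containing the vertex `v`, then `e.erase v` is a chamber of
the link of `{v}`. -/
lemma aux_erase_chamber (K : SComplex V) {e : Finset V} (he : K.IsChamber e)
    {v : V} (hve : v ∈ e) : (K.link {v}).IsChamber (e.erase v) := by
  have hdisj : Disjoint ({v} : Finset V) (e.erase v) := by
    simp [Finset.disjoint_singleton_left]
  have hins : ({v} : Finset V) ∪ e.erase v = e := by
    rw [← Finset.insert_eq, Finset.insert_erase hve]
  refine ⟨⟨hdisj, by rw [hins]; exact he.1⟩, ?_⟩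
  intro s hs hsub
  have hvs : v ∉ s := Finset.disjoint_singleton_left.1 hs.1
  have hes : ({v} : Finset V) ∪ s = e := by
    apply he.2 _ hs.2
    rw [← hins]
    exact Finset.union_subset_union le_rfl hsub
  apply Finset.Subset.antisymm _ hsub
  intro a ha
  refine Finset.mem_erase.2 ⟨fun h => hvs (h ▸ ha), ?_⟩
  rw [← hes]
  exact Finset.mem_union_right _ ha

/-- If `s` is a chamber of the link of `{v}`, then `{v} ∪ s` is a chamber of `K`. -/
lemma aux_union_chamber (K : SComplex V) {n : ℕ} (hpure : K.Pure n) {v : V}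
    {s : Finset V} (hs : (K.link {v}).IsChamber s) : K.IsChamber ({v} ∪ s) := by
  obtain ⟨e, he, hsube⟩ := hpure.1 _ hs.1.2
  have hve : v ∈ e := hsube (by simp)
  have hse : s ⊆ e.erase v := by
    intro a ha
    refine Finset.mem_erase.2 ⟨?_, hsube (Finset.mem_union_right _ ha)⟩
    rintro rfl
    exact (Finset.disjoint_singleton_left.1 hs.1.1) ha
  have h1 : e.erase v = s := hs.2 _ (aux_erase_chamber K he hve).1 hse
  have h2 : ({v} : Finset V) ∪ s = e := by
    rw [← h1, ← Finset.insert_eq, Finset.insert_erase hve]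
  rw [h2]; exact he

/-- Two chambers sharing a vertex are connected by a gallery. -/
lemma aux_shared_vertex {I : Type*} (Δ : TypedComplex V I) (n : ℕ)
    (hpure : Δ.cplx.Pure n)
    (hlink : ∀ v : V, ({v} : Finset V) ∈ Δ.cplx.faces →
      (Δ.cplx.link {v}).IsChamberComplex (n - 1) ∧ (Δ.cplx.link {v}).Thick (n - 1))
    {c d : Finset V} (hc : Δ.cplx.IsChamber c) (hd : Δ.cplx.IsChamber d)
    {v : V} (hvc : v ∈ c) (hvd : v ∈ d) :
    Relation.ReflTransGen (Δ.cplx.Adj n) c d := by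
  set K := Δ.cplx with hK
  have hv : ({v} : Finset V) ∈ K.faces :=
    K.down_closed hc.1 (Finset.singleton_subset_iff.2 hvc)
  have hlc : (K.link {v}).GalleryConnected (n - 1) := (hlink v hv).1.2
  have hgal := hlc _ _ (aux_erase_chamber K hc hvc) (aux_erase_chamber K hd hvd)
  have hstep : ∀ a b : Finset V, (K.link {v}).Adj (n - 1) a b →
      K.Adj n ({v} ∪ a) ({v} ∪ b) := by
    rintro a b ⟨ha, hb, hcard⟩
    refine ⟨aux_union_chamber K hpure ha, aux_union_chamber K hpure hb, ?_⟩
    have hva : v ∉ a := Finset.disjoint_singleton_left.1 ha.1.1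
    have hint : ({v} ∪ a) ∩ ({v} ∪ b) = {v} ∪ (a ∩ b) :=
      (Finset.union_inter_distrib_left _ _ _).symm
    rw [hint, ← Finset.insert_eq,
      Finset.card_insert_of_notMem (fun h => hva (Finset.mem_inter.1 h).1)]
    omega
  have := Relation.ReflTransGen.lift (fun s => ({v} : Finset V) ∪ s) hstep _ _ hgal
  simpa [Function.onFun, ← Finset.insert_eq, Finset.insert_erase hvc, Finset.insert_erase hvd]
    using this

end Aux

/-- Let `Δ` be a pure chamber complex of rank `n` with a type
function, such that the link of every vertex is a thick chamber complex of rank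
`n - 1`.  If the geometric realization of `Δ` (with the weak topology) is connected,
then `Δ` is gallery-connected: any two chambers can be joined by a gallery. -/
theorem statement0 {V I : Type*} [DecidableEq V] [DecidableEq I] [Fintype I]
    (Δ : TypedComplex V I) (n : ℕ) (hn : Fintype.card I = n)
    (hpure : Δ.cplx.Pure n)
    (hlink : ∀ v : V, ({v} : Finset V) ∈ Δ.cplx.faces →
      (Δ.cplx.link {v}).IsChamberComplex (n - 1) ∧ (Δ.cplx.link {v}).Thick (n - 1))
    (hconn : ConnectedSpace Δ.cplx.Space) :
    Δ.cplx.GalleryConnected n := by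
  intro c d hc hd
  rcases Nat.eq_zero_or_pos n with hn0 | hn1
  · have hc0 : c = ∅ := Finset.card_eq_zero.1 (by rw [hpure.2 c hc, hn0])
    have hd0 : d = ∅ := Finset.card_eq_zero.1 (by rw [hpure.2 d hd, hn0])
    rw [hc0, hd0]
  set K := Δ.cplx with hK
  set R := Relation.ReflTransGen (K.Adj n) with hR
  -- every point of the realization has nonempty support
  have hsupp : ∀ x : K.Space, ∃ w, x.1 w ≠ 0 := by
    rintro ⟨f, s, hs, hpos, hsub, hsum⟩
    by_contra h
    push_neg at h
    simp only [ne_eq, not_not] at h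
    rw [Finset.sum_congr rfl fun w _ => h w] at hsum
    simp at hsum
  -- support of a point of a closed simplex is in the corresponding face
  have hsupps : ∀ (s : Finset V) (hsf : s ∈ K.faces)
      (x : stdSimplex ℝ {v : V // v ∈ s}) (w : V),
      (K.inclSimplex hsf x).1 w ≠ 0 → w ∈ s := by
    intro s hsf x w hw
    by_contra hws
    exact hw (dif_neg hws)
  -- the clopen set of points all of whose "carrier chambers" are connected to c
  set U : Set K.Space :=
    {x | ∀ e, K.IsChamber e → (∀ w, x.1 w ≠ 0 → w ∈ e) → R c e} with hU
  -- openness criterion for the weak topology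
  have hopen : ∀ W : Set K.Space,
      (∀ s : {s : Finset V // s ∈ K.faces},
        K.inclSimplex s.2 ⁻¹' W = Set.univ ∨ K.inclSimplex s.2 ⁻¹' W = ∅) →
      IsOpen W := by
    intro W hW
    refine isOpen_iSup_iff.2 fun s => isOpen_coinduced.2 ?_
    rcases hW s with h | h <;> rw [h]
    · exact isOpen_univ
    · exact isOpen_empty
  -- all-or-nothing property of U on each closed simplex
  have key : ∀ s : {s : Finset V // s ∈ K.faces},
      K.inclSimplex s.2 ⁻¹' U = Set.univ ∨ K.inclSimplex s.2 ⁻¹' U = ∅ := by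
    rintro ⟨s, hsf⟩
    obtain ⟨es, hes, hses⟩ := hpure.1 s hsf
    by_cases hRc : R c es
    · left
      ext x
      simp only [Set.mem_preimage, Set.mem_univ, iff_true, hU, Set.mem_setOf_eq]
      intro e he hsuppe
      obtain ⟨w, hw⟩ := hsupp (K.inclSimplex hsf x)
      have hws : w ∈ es := hses (hsupps s hsf x w hw)
      have hwe : w ∈ e := hsuppe w hw
      exact hRc.trans (aux_shared_vertex Δ n hpure hlink hes he hws hwe)
    · right
      ext x
      simp only [Set.mem_preimage, Set.mem_empty_iff_false, iff_false, hU,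
        Set.mem_setOf_eq]
      intro hx
      exact hRc (hx es hes fun w hw => hses (hsupps s hsf x w hw))
  have keyc : ∀ s : {s : Finset V // s ∈ K.faces},
      K.inclSimplex s.2 ⁻¹' Uᶜ = Set.univ ∨ K.inclSimplex s.2 ⁻¹' Uᶜ = ∅ := by
    intro s
    rcases key s with h | h
    · right; rw [Set.preimage_compl, h, Set.compl_univ]
    · left; rw [Set.preimage_compl, h, Set.compl_empty]
  have hclopen : IsClopen U :=
    ⟨isOpen_compl_iff.1 (hopen _ keyc), hopen _ key⟩
  -- barycenters of chambers
  have hncast : ((n : ℝ)) ≠ 0 := Nat.cast_ne_zero.2 (by omega)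
  have hbary : ∀ e, K.IsChamber e → ∃ x : K.Space, ∀ w, x.1 w ≠ 0 ↔ w ∈ e := by
    intro e he
    have hne : ((n : ℝ))⁻¹ ≠ 0 := inv_ne_zero hncast
    refine ⟨⟨fun w => if w ∈ e then (n : ℝ)⁻¹ else 0, e, he.1,
      fun w => by dsimp only; split_ifs; exacts [by positivity, le_rfl],
      fun w hw => by by_contra h; exact hw (if_neg h), ?_⟩, ?_⟩
    · rw [Finset.sum_congr rfl fun w hw => if_pos hw, Finset.sum_const,
        hpure.2 e he, nsmul_eq_mul, mul_inv_cancel₀ hncast]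
    · intro w
      show (if w ∈ e then ((n : ℝ))⁻¹ else 0) ≠ 0 ↔ w ∈ e
      constructor
      · intro hw; by_contra h; exact hw (if_neg h)
      · intro hw; rw [if_pos hw]; exact hne
  obtain ⟨xc, hxc⟩ := hbary c hc
  have hxcU : xc ∈ U := by
    intro e he hsuppe
    have hce : c ⊆ e := fun w hw => hsuppe w ((hxc w).2 hw)
    have : e = c := hc.2 e he.1 hce
    rw [this]
  have hUuniv : U = Set.univ := by
    rcases isClopen_iff.1 hclopen with h | h
    · exact absurd (h ▸ hxcU) (Set.notMem_empty xc)
    · exact h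
  obtain ⟨xd, hxd⟩ := hbary d hd
  have hxdU : xd ∈ U := hUuniv ▸ Set.mem_univ xd
  exact hxdU d hd fun w hw => (hxd w).1 hw
end

section
/- Define σ: S² → the space of 3×3 octonion-hermitian matrices by σ(x,y,z) = [[x², −(jl)xy, −l zx], [(jl)xy, y², j yz], [l zx, −j yz, z²]], where j, l, jl are fixed imaginary octonion units. Then σ(x,y,z) is an idempotent hermitian matrix of trace 1 for every (x,y,z) ∈ S² (hence lands in the projective Cayley plane OP² realized as rank-1 projectors), σ(−x,−y,−z) = σ(x,y,z), and the image Σ = σ(S²) is isometric to the real projective plane ℝP². -/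
set_option maxHeartbeats 2000000


/-! A minimal construction of the real Cayley (octonion) algebra `𝕆` via the
Cayley–Dickson doubling of the quaternions, together with hermitian `3 × 3`
octonion matrices. -/

/-- The octonions, as pairs of quaternions (Cayley–Dickson construction). -/
structure Oct where
  a : Quaternion ℝ
  b : Quaternion ℝ

namespace Oct

def octEquiv : Oct ≃ (Quaternion ℝ × Quaternion ℝ) :=
  ⟨fun o => (o.a, o.b), fun p => ⟨p.1, p.2⟩, fun _ => rfl, fun _ => rfl⟩

noncomputable instance : AddCommGroup Oct := octEquiv.addCommGroup

/-- Cayley–Dickson multiplication. -/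
noncomputable instance : Mul Oct :=
  ⟨fun x y => ⟨x.a * y.a - star y.b * x.b, y.b * x.a + x.b * star y.a⟩⟩

noncomputable instance : One Oct := ⟨⟨1, 0⟩⟩

/-- Octonion conjugation. -/
noncomputable instance : Star Oct := ⟨fun x => ⟨star x.a, -x.b⟩⟩

/-- The canonical embedding of the reals. -/
noncomputable def ofReal (x : ℝ) : Oct := ⟨(x : Quaternion ℝ), 0⟩

/-- The imaginary unit `j`. -/
noncomputable def jO : Oct := ⟨⟨0, 0, 1, 0⟩, 0⟩

/-- The imaginary unit `ℓ`. -/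
noncomputable def lO : Oct := ⟨0, 1⟩

/-- The real part of an octonion. -/
def re (x : Oct) : ℝ := x.a.re

end Oct

/-- Product of `3 × 3` octonion matrices. -/
noncomputable def omul3 (X Y : Matrix (Fin 3) (Fin 3) Oct) : Matrix (Fin 3) (Fin 3) Oct :=
  Matrix.of fun i j => ∑ k : Fin 3, X i k * Y k j

/-- Trace of a `3 × 3` octonion matrix. -/
noncomputable def otrace (X : Matrix (Fin 3) (Fin 3) Oct) : Oct := ∑ i : Fin 3, X i i

/-- Hermitian octonion matrices. -/
def IsOHerm (X : Matrix (Fin 3) (Fin 3) Oct) : Prop := ∀ i j, X j i = star (X i j)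

/-- The euclidean inner product `⟨X, Y⟩ = Re trace (X Y)` on octonion matrices. -/
noncomputable def oinner (X Y : Matrix (Fin 3) (Fin 3) Oct) : ℝ :=
  ∑ i : Fin 3, ∑ j : Fin 3, Oct.re (X i j * Y j i)

/-- The immersion `σ : S² → OP²` of Podestà–Thorbergsson, with values in the trace-1
hermitian `3 × 3` octonion matrices. -/
noncomputable def octSigma (x y z : ℝ) : Matrix (Fin 3) (Fin 3) Oct :=
  Matrix.of
    ![![Oct.ofReal (x ^ 2), -(Oct.jO * Oct.lO * Oct.ofReal (x * y)),
        -(Oct.lO * Oct.ofReal (z * x))],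
      ![Oct.jO * Oct.lO * Oct.ofReal (x * y), Oct.ofReal (y ^ 2),
        Oct.jO * Oct.ofReal (y * z)],
      ![Oct.lO * Oct.ofReal (z * x), -(Oct.jO * Oct.ofReal (y * z)),
        Oct.ofReal (z ^ 2)]]

section Aux

open Oct

@[ext] lemma Oct.ext' (x y : Oct) (ha : x.a = y.a) (hb : x.b = y.b) : x = y := by
  cases x; cases y; simp_all

namespace Oct
@[simp] lemma a_add (x y : Oct) : (x+y).a = x.a + y.a := rfl
@[simp] lemma b_add (x y : Oct) : (x+y).b = x.b + y.b := rfl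
@[simp] lemma a_neg (x : Oct) : (-x).a = -x.a := rfl
@[simp] lemma b_neg (x : Oct) : (-x).b = -x.b := rfl
@[simp] lemma a_zero : (0 : Oct).a = 0 := rfl
@[simp] lemma b_zero : (0 : Oct).b = 0 := rfl
@[simp] lemma a_one : (1 : Oct).a = 1 := rfl
@[simp] lemma b_one : (1 : Oct).b = 0 := rfl
@[simp] lemma a_mul (x y : Oct) : (x*y).a = x.a * y.a - star y.b * x.b := rfl
@[simp] lemma b_mul (x y : Oct) : (x*y).b = y.b * x.a + x.b * star y.a := rfl
@[simp] lemma a_star (x : Oct) : (star x).a = star x.a := rfl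
@[simp] lemma b_star (x : Oct) : (star x).b = -x.b := rfl
@[simp] lemma a_ofReal (t : ℝ) : (ofReal t).a = (t : Quaternion ℝ) := rfl
@[simp] lemma b_ofReal (t : ℝ) : (ofReal t).b = 0 := rfl
@[simp] lemma a_j : jO.a.imJ = 1 := rfl
@[simp] lemma a_j_re : jO.a.re = 0 := rfl
@[simp] lemma a_j_imI : jO.a.imI = 0 := rfl
@[simp] lemma a_j_imK : jO.a.imK = 0 := rfl
@[simp] lemma b_j : jO.b = 0 := rfl
@[simp] lemma a_l : lO.a = 0 := rfl
@[simp] lemma b_l : lO.b = 1 := rfl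
end Oct

@[simp] lemma coe_sq_re (t : ℝ) : ((t : Quaternion ℝ)^2).re = t^2 := by
  rw [pow_two, ← Quaternion.coe_mul]; simp [pow_two]
@[simp] lemma coe_sq_imI (t : ℝ) : ((t : Quaternion ℝ)^2).imI = 0 := by
  rw [pow_two, ← Quaternion.coe_mul]; simp [pow_two]
@[simp] lemma coe_sq_imJ (t : ℝ) : ((t : Quaternion ℝ)^2).imJ = 0 := by
  rw [pow_two, ← Quaternion.coe_mul]; simp [pow_two]
@[simp] lemma coe_sq_imK (t : ℝ) : ((t : Quaternion ℝ)^2).imK = 0 := by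
  rw [pow_two, ← Quaternion.coe_mul]; simp [pow_two]

lemma octSigma_neg (x y z : ℝ) : octSigma (-x) (-y) (-z) = octSigma x y z := by
  unfold octSigma
  norm_num [neg_mul, mul_neg, neg_neg]

lemma jl_extract (t t' : ℝ) (h : Oct.jO * Oct.lO * Oct.ofReal t = Oct.jO * Oct.lO * Oct.ofReal t') :
    t = t' := by
  have := congrArg (fun o => o.b.imJ) h
  simpa [Quaternion.re_mul, Quaternion.imI_mul, Quaternion.imJ_mul, Quaternion.imK_mul] using this

lemma j_extract (t t' : ℝ) (h : Oct.jO * Oct.ofReal t = Oct.jO * Oct.ofReal t') : t = t' := by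
  have := congrArg (fun o => o.a.imJ) h
  simpa [Quaternion.re_mul, Quaternion.imI_mul, Quaternion.imJ_mul, Quaternion.imK_mul] using this

lemma l_extract (t t' : ℝ) (h : Oct.lO * Oct.ofReal t = Oct.lO * Oct.ofReal t') : t = t' := by
  have := congrArg (fun o => o.b.re) h
  simpa using this

lemma ofReal_extract (t t' : ℝ) (h : Oct.ofReal t = Oct.ofReal t') : t = t' := by
  have := congrArg (fun o => o.a.re) h
  simpa using this

end Aux

/-- For `(x, y, z) ∈ S²` the matrix `σ(x, y, z)` is an idempotent
hermitian octonion matrix of trace 1 — hence lies in the Cayley plane `OP²` realized as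
rank-1 projectors — with `σ(-v) = σ(v)`; moreover `σ` is injective up to antipodes and
satisfies `⟨σ(u), σ(v)⟩ = ⟨u, v⟩²`, so that the image `Σ = σ(S²)` (with the induced
metric) is isometric to the real projective plane `ℝP²`. -/
theorem statement18 (x y z : ℝ) (h : x ^ 2 + y ^ 2 + z ^ 2 = 1) :
    IsOHerm (octSigma x y z) ∧
    omul3 (octSigma x y z) (octSigma x y z) = octSigma x y z ∧
    otrace (octSigma x y z) = 1 ∧
    octSigma (-x) (-y) (-z) = octSigma x y z ∧
    (∀ x' y' z' : ℝ, x' ^ 2 + y' ^ 2 + z' ^ 2 = 1 →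
      (octSigma x y z = octSigma x' y' z' ↔
        ((x, y, z) = (x', y', z') ∨ (x, y, z) = (-x', -y', -z')))) ∧
    (∀ x' y' z' : ℝ, x' ^ 2 + y' ^ 2 + z' ^ 2 = 1 →
      oinner (octSigma x y z) (octSigma x' y' z') = (x * x' + y * y' + z * z') ^ 2) := by
  refine ⟨?_, ?_, ?_, octSigma_neg x y z, ?_, ?_⟩
  · -- hermitian
    intro i j
    fin_cases i <;> fin_cases j <;>
      (ext <;>
        simp [octSigma, Quaternion.re_mul, Quaternion.imI_mul, Quaternion.imJ_mul,
          Quaternion.imK_mul] <;>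
        ring)
  · -- idempotent
    ext i j
    all_goals fin_cases i <;> fin_cases j <;>
      (simp only [omul3, octSigma, Matrix.of_apply, Fin.sum_univ_three,
          Matrix.cons_val', Matrix.cons_val_zero, Matrix.cons_val_one, Matrix.head_cons,
          Matrix.empty_val', Matrix.cons_val_fin_one, Matrix.head_fin_const,
          Oct.a_add, Oct.b_add, Oct.a_neg, Oct.b_neg, Oct.a_mul, Oct.b_mul,
          Oct.a_star, Oct.b_star, Oct.a_ofReal, Oct.b_ofReal, Oct.a_j, Oct.b_j,
          Oct.a_l, Oct.b_l, Oct.a_zero, Oct.b_zero] <;>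
        simp [Quaternion.re_mul, Quaternion.imI_mul, Quaternion.imJ_mul,
          Quaternion.imK_mul] <;>
        first
          | rfl
          | ring1
          | linear_combination (x^2)*h
          | linear_combination (y^2)*h
          | linear_combination (z^2)*h
          | linear_combination (x*y)*h
          | linear_combination (y*z)*h
          | linear_combination (z*x)*h
          | linear_combination (-(x*y))*h
          | linear_combination (-(y*z))*h
          | linear_combination (-(z*x))*h
          | linear_combination (-(x^2))*h
          | linear_combination (-(y^2))*h
          | linear_combination (-(z^2))*h)
  · -- trace
    ext <;>
      simp [otrace, octSigma, Fin.sum_univ_three, ← Quaternion.coe_pow, Quaternion.re_one,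
        Quaternion.imI_one, Quaternion.imJ_one, Quaternion.imK_one] <;>
      linarith
  · -- injectivity up to antipodes
    intro x' y' z' h'
    constructor
    · intro heq
      have e00 : Oct.ofReal (x ^ 2) = Oct.ofReal (x' ^ 2) := congrFun (congrFun heq 0) 0
      have e11 : Oct.ofReal (y ^ 2) = Oct.ofReal (y' ^ 2) := congrFun (congrFun heq 1) 1
      have e22 : Oct.ofReal (z ^ 2) = Oct.ofReal (z' ^ 2) := congrFun (congrFun heq 2) 2
      have e10 : Oct.jO * Oct.lO * Oct.ofReal (x * y) = Oct.jO * Oct.lO * Oct.ofReal (x' * y') :=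
        congrFun (congrFun heq 1) 0
      have e12 : Oct.jO * Oct.ofReal (y * z) = Oct.jO * Oct.ofReal (y' * z') :=
        congrFun (congrFun heq 1) 2
      have e20 : Oct.lO * Oct.ofReal (z * x) = Oct.lO * Oct.ofReal (z' * x') :=
        congrFun (congrFun heq 2) 0
      have hx2 := ofReal_extract _ _ e00
      have hy2 := ofReal_extract _ _ e11
      have hz2 := ofReal_extract _ _ e22
      have hxy := jl_extract _ _ e10
      have hyz := j_extract _ _ e12
      have hzx := l_extract _ _ e20
      have hs : (x*x'+y*y'+z*z')^2 = 1 := by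
        linear_combination (x'*y' - x*y)*hxy + (y'*z' - y*z)*hyz + (z'*x' - z*x)*hzx +
          (x^2-x'^2)*hy2 + (y^2-y'^2)*hz2 + (z^2-z'^2)*hx2 +
          (x^2+y^2+z^2)*h' + h
      have hfac : (x*x'+y*y'+z*z'-1)*(x*x'+y*y'+z*z'+1) = 0 := by linear_combination hs
      rcases mul_eq_zero.mp hfac with hs1 | hs1
      · left
        have h0 : (x-x')^2 + (y-y')^2 + (z-z')^2 = 0 := by linear_combination h + h' - 2*hs1
        have q1 := sq_nonneg (x-x')
        have q2 := sq_nonneg (y-y')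
        have q3 := sq_nonneg (z-z')
        have k1 : x - x' = 0 := sq_eq_zero_iff.mp (by linarith)
        have k2 : y - y' = 0 := sq_eq_zero_iff.mp (by linarith)
        have k3 : z - z' = 0 := sq_eq_zero_iff.mp (by linarith)
        have hx : x = x' := by linarith
        have hy : y = y' := by linarith
        have hz : z = z' := by linarith
        rw [hx, hy, hz]
      · right
        have h0 : (x+x')^2 + (y+y')^2 + (z+z')^2 = 0 := by linear_combination h + h' + 2*hs1
        have q1 := sq_nonneg (x+x')
        have q2 := sq_nonneg (y+y')
        have q3 := sq_nonneg (z+z')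
        have k1 : x + x' = 0 := sq_eq_zero_iff.mp (by linarith)
        have k2 : y + y' = 0 := sq_eq_zero_iff.mp (by linarith)
        have k3 : z + z' = 0 := sq_eq_zero_iff.mp (by linarith)
        have hx : x = -x' := by linarith
        have hy : y = -y' := by linarith
        have hz : z = -z' := by linarith
        rw [hx, hy, hz]
    · rintro (heq | heq) <;> rw [Prod.mk.injEq, Prod.mk.injEq] at heq <;>
        obtain ⟨hx, hy, hz⟩ := heq <;> subst hx hy hz
      · rfl
      · exact octSigma_neg x' y' z'
  · -- inner products
    intro x' y' z' _
    simp only [oinner, omul3, octSigma, Oct.re, Matrix.of_apply, Fin.sum_univ_three,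
      Matrix.cons_val', Matrix.cons_val_zero, Matrix.cons_val_one, Matrix.head_cons,
      Matrix.empty_val', Matrix.cons_val_fin_one, Matrix.head_fin_const,
      Oct.a_add, Oct.a_neg, Oct.a_mul, Oct.a_star, Oct.b_star, Oct.b_neg,
      Oct.a_ofReal, Oct.b_ofReal, Oct.a_j, Oct.b_j, Oct.a_l, Oct.b_l]
    simp [Quaternion.re_mul, Quaternion.imI_mul, Quaternion.imJ_mul, Quaternion.imK_mul]
    ring
end
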